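/- arXiv:1309.4065 — 7 statements merged into one kernel-verified Lean document; each statement's English description precedes it below -/
import Mathlib

section
/- Let X and Y be geodesic metric spaces and φ : X → Y a map such that: (1) there exists L > 0 with every point of Y within distance L of the image φ(X); (2) there exists K > 0 with dist(φ x₁, φ x₂) ≤ K·dist(x₁, x₂) for all x₁, x₂ ∈ X; and (3) for every M > 0 there exists N > 0 such that dist(x₁, x₂) > N implies dist(φ x₁, φ x₂) > M. Then φ is a quasi-isometry: there exist constants A ≥ 1 and B ≥ 0 such that (1/A)·dist(x₁, x₂) − B ≤ dist(φ x₁, φ x₂) ≤ A·dist(x₁, x₂) + B for all x₁, x₂ ∈ X, and (by (1)) the image φ(X) is L-quasidense in Y. -/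
/-- A metric space `Z` is geodesic: any two points are joined by a path parametrized by
arc length on the interval `[0, dist z₁ z₂]`. -/
def IsGeodesicMetricSpace (Z : Type*) [MetricSpace Z] : Prop :=
  ∀ z₁ z₂ : Z, ∃ γ : ℝ → Z, γ 0 = z₁ ∧ γ (dist z₁ z₂) = z₂ ∧
    ∀ s ∈ Set.Icc (0 : ℝ) (dist z₁ z₂), ∀ t ∈ Set.Icc (0 : ℝ) (dist z₁ z₂),
      dist (γ s) (γ t) = |s - t|

lemma key_lemma {X Y : Type*} [MetricSpace X] [MetricSpace Y]
    (hY : IsGeodesicMetricSpace Y)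
    (φ : X → Y) (L : ℝ) (hL : 0 < L)
    (h1 : ∀ y : Y, ∃ x : X, dist y (φ x) ≤ L)
    (N : ℝ) (hNpos : 0 < N)
    (hN : ∀ x₁ x₂ : X, dist x₁ x₂ > N → dist (φ x₁) (φ x₂) > 2 * L + 1)
    (x₁ x₂ : X) : dist x₁ x₂ ≤ N * (dist (φ x₁) (φ x₂) + 1) := by
  have hN' : ∀ a b : X, dist (φ a) (φ b) ≤ 2 * L + 1 → dist a b ≤ N := by
    intro a b h
    by_contra hc
    exact absurd h (not_le.mpr (hN a b (lt_of_not_ge hc)))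
  set D : ℝ := dist (φ x₁) (φ x₂) with hD
  have hD0 : 0 ≤ D := dist_nonneg
  obtain ⟨γ, hγ0, hγD, hγ⟩ := hY (φ x₁) (φ x₂)
  set n : ℕ := ⌈D⌉₊ with hn
  rcases Nat.eq_zero_or_pos n with h0 | hpos
  · have hDz : D = 0 := le_antisymm (by
      have := Nat.ceil_eq_zero.mp h0
      linarith) hD0
    have : dist x₁ x₂ ≤ N := hN' x₁ x₂ (by rw [← hD, hDz]; linarith)
    nlinarith
  · have hnR : (0 : ℝ) < n := by exact_mod_cast hpos
    have hDn : D ≤ n := Nat.le_ceil D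
    have hnD1 : (n : ℝ) ≤ D + 1 := by
      have := Nat.ceil_lt_add_one hD0
      linarith
    set z : ℕ → X := fun i => if i = 0 then x₁ else if n ≤ i then x₂ else
      Classical.choose (h1 (γ ((i : ℝ) * D / n))) with hz
    have hmem : ∀ i : ℕ, i ≤ n → (i : ℝ) * D / n ∈ Set.Icc (0 : ℝ) D := by
      intro i hi
      constructor
      · positivity
      · rw [div_le_iff₀ hnR]
        have : (i : ℝ) ≤ n := by exact_mod_cast hi
        nlinarith
    have hclose : ∀ i : ℕ, i ≤ n → dist (γ ((i : ℝ) * D / n)) (φ (z i)) ≤ L := by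
      intro i hi
      by_cases h0 : i = 0
      · subst h0
        simp [hz, hγ0, hL.le]
      by_cases hn' : n ≤ i
      · have hin : i = n := le_antisymm hi hn'
        have hcast : (n : ℝ) * D / n = D := by field_simp
        rw [hin, hcast, hD, hγD]
        simp only [hz, if_neg hpos.ne', if_pos le_rfl]
        simp [hL.le]
      · simp only [hz, if_neg h0, if_neg hn']
        exact Classical.choose_spec (h1 (γ ((i : ℝ) * D / n)))
    have hstep : ∀ i : ℕ, i < n → dist (z i) (z (i + 1)) ≤ N := by
      intro i hi
      apply hN'
      have hi1 : i + 1 ≤ n := hi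
      have hti := hmem i (le_of_lt hi)
      have hti1 := hmem (i + 1) hi1
      have hseg : dist (γ ((i : ℝ) * D / n)) (γ (((i : ℝ) + 1) * D / n)) = D / n := by
        have := hγ _ (by exact_mod_cast hti) _ (by push_cast at hti1 ⊢; exact hti1)
        rw [this]
        rw [show (i : ℝ) * D / n - ((i : ℝ) + 1) * D / n = -(D / n) by ring,
          abs_neg, abs_of_nonneg (by positivity)]
      have hDn1 : D / n ≤ 1 := by
        rw [div_le_one hnR]; exact hDn
      have c1 := hclose i (le_of_lt hi)
      have c2 := hclose (i + 1) hi1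
      push_cast at c2
      calc dist (φ (z i)) (φ (z (i + 1)))
          ≤ dist (φ (z i)) (γ ((i : ℝ) * D / n)) +
            dist (γ ((i : ℝ) * D / n)) (γ (((i : ℝ) + 1) * D / n)) +
            dist (γ (((i : ℝ) + 1) * D / n)) (φ (z (i + 1))) := dist_triangle4 _ _ _ _
        _ ≤ L + D / n + L := by
            rw [dist_comm (φ (z i))]
            exact add_le_add (add_le_add c1 hseg.le) c2
        _ ≤ 2 * L + 1 := by linarith
    have hz0 : z 0 = x₁ := by simp [hz]
    have hzn : z n = x₂ := by simp [hz, hpos.ne']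
    calc dist x₁ x₂ = dist (z 0) (z n) := by rw [hz0, hzn]
      _ ≤ ∑ i ∈ Finset.range n, dist (z i) (z (i + 1)) := dist_le_range_sum_dist z n
      _ ≤ ∑ _i ∈ Finset.range n, N := Finset.sum_le_sum fun i hi =>
            hstep i (Finset.mem_range.mp hi)
      _ = n * N := by rw [Finset.sum_const, Finset.card_range, nsmul_eq_mul]
      _ ≤ (D + 1) * N := by nlinarith
      _ = N * (D + 1) := by ring

/-- A coarsely Lipschitz, coarsely surjective map between geodesic spaces that is metrically
proper (condition (3)) is a quasi-isometry, and its image is `L`-quasidense. -/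
theorem stmt1 {X Y : Type*} [MetricSpace X] [MetricSpace Y]
    (hX : IsGeodesicMetricSpace X) (hY : IsGeodesicMetricSpace Y)
    (φ : X → Y) (L : ℝ) (hL : 0 < L)
    (h1 : ∀ y : Y, ∃ x : X, dist y (φ x) ≤ L)
    (K : ℝ) (hK : 0 < K)
    (h2 : ∀ x₁ x₂ : X, dist (φ x₁) (φ x₂) ≤ K * dist x₁ x₂)
    (h3 : ∀ M : ℝ, 0 < M → ∃ N : ℝ, 0 < N ∧
      ∀ x₁ x₂ : X, dist x₁ x₂ > N → dist (φ x₁) (φ x₂) > M) :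
    (∃ A B : ℝ, 1 ≤ A ∧ 0 ≤ B ∧ ∀ x₁ x₂ : X,
      (1 / A) * dist x₁ x₂ - B ≤ dist (φ x₁) (φ x₂) ∧
      dist (φ x₁) (φ x₂) ≤ A * dist x₁ x₂ + B) ∧
    (∀ y : Y, ∃ x : X, dist y (φ x) ≤ L) := by
  obtain ⟨N, hNpos, hN⟩ := h3 (2 * L + 1) (by linarith)
  refine ⟨⟨max (max N K) 1, 1, le_max_right _ _, zero_le_one, fun x₁ x₂ => ?_⟩, h1⟩
  set A : ℝ := max (max N K) 1 with hA
  have hA1 : (1 : ℝ) ≤ A := le_max_right _ _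
  have hApos : (0 : ℝ) < A := lt_of_lt_of_le one_pos hA1
  have hNA : N ≤ A := le_trans (le_max_left _ _) (le_max_left _ _)
  have hKA : K ≤ A := le_trans (le_max_right _ _) (le_max_left _ _)
  constructor
  · have hkey := key_lemma hY φ L hL h1 N hNpos hN x₁ x₂
    have h' : dist x₁ x₂ ≤ A * (dist (φ x₁) (φ x₂) + 1) := by
      have : N * (dist (φ x₁) (φ x₂) + 1) ≤ A * (dist (φ x₁) (φ x₂) + 1) := by
        have : (0:ℝ) ≤ dist (φ x₁) (φ x₂) + 1 := by positivity
        nlinarith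
      linarith
    rw [div_mul_eq_mul_div, one_mul, sub_le_iff_le_add, div_le_iff₀ hApos]
    nlinarith
  · have := h2 x₁ x₂
    nlinarith [dist_nonneg (x := x₁) (y := x₂)]
end

section
/- Let u = (x₁, n₁) and v = (x₂, n₂) be adjacent vertices of the combinatorial horoball over ℤ (so either n₁ = n₂ and 0 < |x₁ − x₂| ≤ exp n₁, or x₁ = x₂ and |n₁ − n₂| = 1). Then the hyperbolic distance in ℍ between φ u = x₁ + (exp n₁)·i and φ v = x₂ + (exp n₂)·i is at most 1. -/
/-- The combinatorial horoball over `ℤ`: vertices `ℤ × ℕ`; `(x, n)` and `(y, n)` are adjacent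
whenever `0 < |x - y| ≤ exp n`, and `(x, n)` is adjacent to `(x, n + 1)`. -/
def ZHoroball : SimpleGraph (ℤ × ℕ) where
  Adj u v :=
    (u.2 = v.2 ∧ 0 < |u.1 - v.1| ∧ ((|u.1 - v.1| : ℤ) : ℝ) ≤ Real.exp u.2) ∨
    (u.1 = v.1 ∧ (u.2 = v.2 + 1 ∨ v.2 = u.2 + 1))
  symm := by
    constructor
    rintro ⟨x, m⟩ ⟨y, n⟩ (⟨h1, h2, h3⟩ | ⟨h1, h2⟩)
    · left
      refine ⟨h1.symm, by rwa [abs_sub_comm], ?_⟩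
      rw [abs_sub_comm]
      simp only at h1 ⊢
      rw [← h1]
      exact h3
    · exact Or.inr ⟨h1.symm, h2.symm⟩
  loopless := by
    constructor
    rintro ⟨x, n⟩ (⟨_, h2, _⟩ | ⟨_, h2 | h2⟩) <;> simp_all

/-- The point `k + (exp n)·i` of the hyperbolic upper half-plane `ℍ`. -/
noncomputable def horoPt (k : ℤ) (n : ℕ) : UpperHalfPlane :=
  ⟨⟨(k : ℝ), Real.exp n⟩, Real.exp_pos n⟩

open Real in
lemma vert_ratio (n : ℕ) :
    (Real.exp (n+1) - Real.exp n) / (2 * Real.sqrt (Real.exp n * Real.exp (n+1)))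
      = Real.sinh (1/2) := by
  rw [← Real.exp_add, ← Real.exp_half, Real.sinh_eq]
  have e1 : rexp ((n:ℝ)+1) = rexp (((n:ℝ) + ((n:ℝ)+1))/2) * rexp (1/2) := by
    rw [← Real.exp_add]; ring_nf
  have e2 : rexp (n:ℝ) = rexp (((n:ℝ) + ((n:ℝ)+1))/2) * rexp (-(1/2)) := by
    rw [← Real.exp_add]; ring_nf
  rw [div_eq_div_iff (by positivity) (by norm_num), e1, e2]
  ring

lemma horoPt_im (k : ℤ) (n : ℕ) : (horoPt k n).im = Real.exp n := rfl
lemma horoPt_coe (k : ℤ) (n : ℕ) : ((horoPt k n : UpperHalfPlane) : ℂ) = ⟨(k:ℝ), Real.exp n⟩ := rfl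

open Real in
lemma vert_dist (x : ℤ) (n : ℕ) : dist (horoPt x n) (horoPt x (n+1)) ≤ 1 := by
  rw [UpperHalfPlane.dist_le_iff_le_sinh]
  rw [horoPt_im, horoPt_im, horoPt_coe, horoPt_coe,
    Complex.dist_of_re_eq (rfl : ((x:ℝ)) = ((x:ℝ)))]
  show dist (rexp (n:ℝ)) (rexp ((n+1:ℕ):ℝ)) / _ ≤ _
  push_cast
  rw [Real.dist_eq, abs_of_nonpos (by nlinarith [Real.exp_le_exp.2 (by linarith : (n:ℝ) ≤ (n:ℝ)+1)]), neg_sub, vert_ratio]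

/-- Adjacent vertices of the combinatorial horoball over `ℤ` map to points of `ℍ` at
hyperbolic distance at most `1`. -/
theorem stmt4 (u v : ℤ × ℕ) (h : ZHoroball.Adj u v) :
    dist (horoPt u.1 u.2) (horoPt v.1 v.2) ≤ 1 := by
  obtain ⟨x₁, n₁⟩ := u
  obtain ⟨x₂, n₂⟩ := v
  rcases h with ⟨h1, h2, h3⟩ | ⟨h1, h2 | h2⟩
  · simp only at h1 h2 h3 ⊢
    subst h1
    rw [UpperHalfPlane.dist_le_iff_le_sinh, horoPt_im, horoPt_im, horoPt_coe, horoPt_coe,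
      Complex.dist_of_im_eq (rfl : Real.exp n₁ = Real.exp n₁)]
    show dist ((x₁:ℝ)) ((x₂:ℝ)) / _ ≤ _
    have hd : dist ((x₁:ℝ)) ((x₂:ℝ)) = ((|x₁ - x₂| : ℤ) : ℝ) := by
      rw [Real.dist_eq]; push_cast; rfl
    rw [hd]
    have hs : (1/2 : ℝ) ≤ Real.sinh (1/2) := (Real.self_lt_sinh_iff.2 (by norm_num)).le
    have hpos : (0:ℝ) < Real.exp n₁ := Real.exp_pos _
    have hsq : Real.sqrt (Real.exp n₁ * Real.exp n₁) = Real.exp n₁ := by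
      rw [Real.sqrt_mul_self hpos.le]
    rw [hsq]
    calc ((|x₁ - x₂| : ℤ) : ℝ) / (2 * Real.exp n₁) ≤ Real.exp n₁ / (2 * Real.exp n₁) := by
          gcongr
      _ = 1/2 := by field_simp
      _ ≤ _ := hs
  · simp only at h1 h2 ⊢
    subst h1 h2
    rw [dist_comm]
    exact vert_dist x₁ n₂
  · simp only at h1 h2 ⊢
    subst h1 h2
    exact vert_dist x₁ n₁
end

section
/- Let k₁, k₂ ∈ ℤ, n₁, n₂ ∈ ℕ and C > 0. If the hyperbolic distance in ℍ between the points k₁ + (exp n₁)·i and k₂ + (exp n₂)·i is at most C, then |n₁ − n₂| ≤ C and |k₁ − k₂| ≤ exp(C + max(n₁, n₂)). -/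
/-- If two points `k₁ + (exp n₁)·i` and `k₂ + (exp n₂)·i` of `ℍ` are at hyperbolic distance
at most `C`, then their height and horizontal coordinates differ boundedly. -/
theorem stmt5 (k₁ k₂ : ℤ) (n₁ n₂ : ℕ) (C : ℝ) (hC : 0 < C)
    (h : dist (horoPt k₁ n₁) (horoPt k₂ n₂) ≤ C) :
    |(n₁ : ℝ) - (n₂ : ℝ)| ≤ C ∧
    |(k₁ : ℝ) - (k₂ : ℝ)| ≤ Real.exp (C + (max n₁ n₂ : ℕ)) := by
  have him1 : (horoPt k₁ n₁).im = Real.exp n₁ := rfl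
  have him2 : (horoPt k₂ n₂).im = Real.exp n₂ := rfl
  constructor
  · have := UpperHalfPlane.dist_log_im_le (horoPt k₁ n₁) (horoPt k₂ n₂)
    rw [him1, him2, Real.log_exp, Real.log_exp, Real.dist_eq] at this
    exact this.trans h
  · have h1 : dist ((horoPt k₁ n₁ : UpperHalfPlane) : ℂ) ((horoPt k₂ n₂ : UpperHalfPlane) : ℂ) ≤
        Real.exp n₂ * (Real.exp (dist (horoPt k₁ n₁) (horoPt k₂ n₂)) - 1) := by
      simpa [him2] using UpperHalfPlane.dist_coe_le (horoPt k₁ n₁) (horoPt k₂ n₂)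
    have hre : |(k₁ : ℝ) - (k₂ : ℝ)| ≤ dist ((horoPt k₁ n₁ : UpperHalfPlane) : ℂ) ((horoPt k₂ n₂ : UpperHalfPlane) : ℂ) := by
      rw [Complex.dist_eq]
      have := Complex.abs_re_le_norm (((horoPt k₁ n₁ : UpperHalfPlane) : ℂ) - ((horoPt k₂ n₂ : UpperHalfPlane) : ℂ))
      simpa [horoPt, UpperHalfPlane.coe] using this
    have h2 : Real.exp n₂ * (Real.exp (dist (horoPt k₁ n₁) (horoPt k₂ n₂)) - 1) ≤
        Real.exp (C + (max n₁ n₂ : ℕ)) := by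
      rw [Real.exp_add]
      have e1 : Real.exp (dist (horoPt k₁ n₁) (horoPt k₂ n₂)) - 1 ≤ Real.exp C := by
        have := Real.exp_le_exp.2 h
        linarith
      have e2 : Real.exp (n₂ : ℝ) ≤ Real.exp ((max n₁ n₂ : ℕ) : ℝ) := by
        apply Real.exp_le_exp.2
        exact_mod_cast le_max_right n₁ n₂
      calc Real.exp n₂ * (Real.exp (dist (horoPt k₁ n₁) (horoPt k₂ n₂)) - 1)
          ≤ Real.exp ((max n₁ n₂ : ℕ) : ℝ) * Real.exp C := by
            apply mul_le_mul e2 e1 _ (Real.exp_pos _).le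
            have := Real.one_le_exp (dist_nonneg (x := horoPt k₁ n₁) (y := horoPt k₂ n₂))
            linarith
        _ = Real.exp C * Real.exp ((max n₁ n₂ : ℕ) : ℝ) := mul_comm _ _
    exact hre.trans (h1.trans h2)
end

section
/- Let a, b ∈ ℤ with a ≠ b, let m, n ∈ ℕ, and set h = max(m, n, ⌈log |a − b|⌉) (natural logarithm, with ⌈·⌉ the ceiling as a natural number). Then the graph distance in the combinatorial horoball over ℤ satisfies d_G((a, m), (b, n)) ≤ (h − m) + (h − n) + 1. -/
/-- Vertical walk of length `d` from `(x, k)` to `(x, k + d)`. -/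
lemma ZHoroball.vert (x : ℤ) (k d : ℕ) :
    ∃ p : ZHoroball.Walk (x, k) (x, k + d), p.length = d := by
  induction d with
  | zero => exact ⟨SimpleGraph.Walk.nil, rfl⟩
  | succ d ih =>
    obtain ⟨p, hp⟩ := ih
    have hadj : ZHoroball.Adj (x, k + d) (x, k + (d + 1)) := by
      right
      exact ⟨rfl, Or.inr (by omega)⟩
    refine ⟨p.append (SimpleGraph.Walk.cons hadj SimpleGraph.Walk.nil), ?_⟩
    simp [hp]

/-- The preferred path through the horoball (up from `(a, m)` to height
`h = max (m, n, ⌈log |a − b|⌉)`, one horizontal edge, then down to `(b, n)`) gives the upper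
bound `d_G((a, m), (b, n)) ≤ (h − m) + (h − n) + 1`. -/
theorem stmt6 (a b : ℤ) (hab : a ≠ b) (m n : ℕ) :
    ZHoroball.dist (a, m) (b, n) ≤
      (max (max m n) ⌈Real.log |(a : ℝ) - (b : ℝ)|⌉₊ - m) +
      (max (max m n) ⌈Real.log |(a : ℝ) - (b : ℝ)|⌉₊ - n) + 1 := by
  set h : ℕ := max (max m n) ⌈Real.log |(a : ℝ) - (b : ℝ)|⌉₊ with hh
  have hm : m ≤ h := le_trans (le_max_left m n) (le_max_left _ _)
  have hn : n ≤ h := le_trans (le_max_right m n) (le_max_left _ _)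
  have e1 : m + (h - m) = h := by omega
  have e2 : n + (h - n) = h := by omega
  have v1 := ZHoroball.vert a m (h - m)
  have v2 := ZHoroball.vert b n (h - n)
  rw [e1] at v1
  rw [e2] at v2
  obtain ⟨p1, hp1⟩ := v1
  obtain ⟨p2, hp2⟩ := v2
  have habs : (0 : ℝ) < |(a : ℝ) - (b : ℝ)| := by
    rw [abs_pos, sub_ne_zero]
    exact_mod_cast hab
  have hlog : Real.log |(a : ℝ) - (b : ℝ)| ≤ (h : ℝ) := by
    calc Real.log |(a : ℝ) - (b : ℝ)| ≤ (⌈Real.log |(a : ℝ) - (b : ℝ)|⌉₊ : ℝ) := Nat.le_ceil _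
    _ ≤ (h : ℝ) := Nat.cast_le.mpr (le_max_right _ _)
  have hadj : ZHoroball.Adj (a, h) (b, h) := by
    left
    refine ⟨rfl, ?_, ?_⟩
    · simpa [abs_pos, sub_ne_zero] using hab
    · have : ((|a - b| : ℤ) : ℝ) = |(a : ℝ) - (b : ℝ)| := by push_cast; rfl
      rw [this, ← Real.exp_log habs]
      exact Real.exp_le_exp.mpr hlog
  have hwalk : ZHoroball.dist (a, m) (b, n) ≤
      (p1.append (SimpleGraph.Walk.cons hadj p2.reverse)).length :=
    SimpleGraph.dist_le _
  calc ZHoroball.dist (a, m) (b, n)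
      ≤ (p1.append (SimpleGraph.Walk.cons hadj p2.reverse)).length := hwalk
    _ = (h - m) + (h - n) + 1 := by
        simp [SimpleGraph.Walk.length_append, SimpleGraph.Walk.length_cons,
          SimpleGraph.Walk.length_reverse, hp1, hp2]
        omega
end

section
/- There is a universal constant C > 0 (independent of the graph) such that the following holds. Let X be a connected simple graph with graph metric d_X, let x and y be distinct vertices of X, and let a, b ∈ ℕ. Set h = ⌈log d_X(x, y)⌉ (natural logarithm, ceiling as a natural number) and H = max(h, a, b). Then the graph distance in the combinatorial horoball H(X) satisfies |d_{H(X)}((x, a), (y, b)) − ((H − a) + (H − b))| ≤ C. -/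
/-- The combinatorial horoball over a graph `X`: vertices `V × ℕ`; `(x, n)` and `(y, n)` are
adjacent whenever `0 < d_X(x, y) ≤ exp n`, and `(x, n)` is adjacent to `(x, n + 1)`. -/
def comboHoroball {V : Type*} (X : SimpleGraph V) : SimpleGraph (V × ℕ) where
  Adj u v :=
    (u.2 = v.2 ∧ 0 < X.dist u.1 v.1 ∧ (X.dist u.1 v.1 : ℝ) ≤ Real.exp u.2) ∨
    (u.1 = v.1 ∧ (u.2 = v.2 + 1 ∨ v.2 = u.2 + 1))
  symm := by
    constructor
    rintro ⟨x, m⟩ ⟨y, n⟩ (⟨h1, h2, h3⟩ | ⟨h1, h2⟩)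
    · left
      refine ⟨h1.symm, by rwa [SimpleGraph.dist_comm], ?_⟩
      rw [SimpleGraph.dist_comm]
      simp only at h1 ⊢
      rw [← h1]
      exact h3
    · exact Or.inr ⟨h1.symm, h2.symm⟩
  loopless := by
    constructor
    rintro ⟨x, n⟩ (⟨_, h2, _⟩ | ⟨_, h2 | h2⟩) <;> simp_all [SimpleGraph.dist_self]

open Real SimpleGraph

/-- A 1-Lipschitz potential function giving the lower bound. -/
noncomputable def horoPot {V : Type*} (X : SimpleGraph V) (u v : V × ℕ) : ℝ :=
  2 * Real.log ((X.dist u.1 v.1 : ℝ) + 2 * Real.exp u.2 + 2 * Real.exp v.2)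
    - u.2 - v.2

lemma horoPot_edge {V : Type*} (X : SimpleGraph V) (hX : X.Connected)
    {u u' v : V × ℕ} (h : (comboHoroball X).Adj u u') :
    horoPot X u v ≤ horoPot X u' v + 1 := by
  have hA'pos : (0:ℝ) < (X.dist u'.1 v.1 : ℝ) + 2 * Real.exp u'.2 + 2 * Real.exp v.2 := by
    positivity
  rcases h with ⟨h1, _, h3⟩ | ⟨h1, h2 | h2⟩
  · -- horizontal edge
    have htri : (X.dist u.1 v.1 : ℝ) ≤ (X.dist u.1 u'.1 : ℝ) + (X.dist u'.1 v.1 : ℝ) := by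
      exact_mod_cast hX.dist_triangle (u := u.1) (v := u'.1) (w := v.1)
    have h4 : Real.exp u.2 = Real.exp u'.2 := by rw [h1]
    have hle : (X.dist u.1 v.1 : ℝ) + 2 * Real.exp u.2 + 2 * Real.exp v.2 ≤
        (3/2) * ((X.dist u'.1 v.1 : ℝ) + 2 * Real.exp u'.2 + 2 * Real.exp v.2) := by
      have hv := Real.exp_pos (v.2 : ℝ)
      have hd' : (0:ℝ) ≤ (X.dist u'.1 v.1 : ℝ) := by positivity
      nlinarith [h3, htri]
    have hlog := Real.log_le_log (by positivity) hle
    rw [Real.log_mul (by norm_num) (ne_of_gt hA'pos)] at hlog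
    have h32 : Real.log (3/2) ≤ 1/2 := by
      rw [Real.log_le_iff_le_exp (by norm_num)]
      have := Real.add_one_le_exp (1/2 : ℝ)
      linarith
    have hnn : (u.2 : ℝ) = u'.2 := by exact_mod_cast h1
    unfold horoPot
    linarith [hlog, h32, hnn]
  · -- vertical edge, u.2 = u'.2 + 1
    have hd : X.dist u.1 v.1 = X.dist u'.1 v.1 := by rw [h1]
    have hexp : Real.exp u.2 = Real.exp 1 * Real.exp u'.2 := by
      rw [← Real.exp_add]; congr 1; push_cast [h2]; ring
    have hle : (X.dist u.1 v.1 : ℝ) + 2 * Real.exp u.2 + 2 * Real.exp v.2 ≤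
        Real.exp 1 * ((X.dist u'.1 v.1 : ℝ) + 2 * Real.exp u'.2 + 2 * Real.exp v.2) := by
      have h1e : (1:ℝ) ≤ Real.exp 1 := by linarith [Real.add_one_le_exp (1:ℝ)]
      have hd' : (0:ℝ) ≤ (X.dist u'.1 v.1 : ℝ) := by positivity
      have hv := Real.exp_pos (v.2 : ℝ)
      have hu' := Real.exp_pos (u'.2 : ℝ)
      rw [hd, hexp]; nlinarith
    have hlog := Real.log_le_log (by positivity) hle
    rw [Real.log_mul (ne_of_gt (Real.exp_pos 1)) (ne_of_gt hA'pos), Real.log_exp] at hlog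
    have hn : (u.2 : ℝ) = (u'.2 : ℝ) + 1 := by exact_mod_cast h2
    unfold horoPot
    linarith [hlog, hn]
  · -- vertical edge, u'.2 = u.2 + 1
    have hd : X.dist u.1 v.1 = X.dist u'.1 v.1 := by rw [h1]
    have hle : (X.dist u.1 v.1 : ℝ) + 2 * Real.exp u.2 + 2 * Real.exp v.2 ≤
        (X.dist u'.1 v.1 : ℝ) + 2 * Real.exp u'.2 + 2 * Real.exp v.2 := by
      have hm : Real.exp (u.2 : ℝ) ≤ Real.exp (u'.2 : ℝ) := by
        apply Real.exp_le_exp.2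
        exact_mod_cast Nat.le_of_eq h2.symm |>.trans' (Nat.le_succ u.2)
      rw [hd]; linarith
    have hlog := Real.log_le_log (by positivity) hle
    have hn : (u'.2 : ℝ) = (u.2 : ℝ) + 1 := by exact_mod_cast h2
    unfold horoPot
    linarith [hlog, hn]

lemma horoPot_le_length {V : Type*} (X : SimpleGraph V) (hX : X.Connected)
    {u v : V × ℕ} (p : (comboHoroball X).Walk u v) :
    horoPot X u v ≤ (p.length : ℝ) + 2 * Real.log 4 := by
  induction p with
  | nil =>
    unfold horoPot
    rw [SimpleGraph.dist_self]
    simp only [Nat.cast_zero]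
    rw [show ∀ c : ℝ, (0:ℝ) + 2 * Real.exp c + 2 * Real.exp c = 4 * Real.exp c from
      fun c => by ring]
    rw [Real.log_mul (by norm_num) (Real.exp_ne_zero _), Real.log_exp]
    simp only [SimpleGraph.Walk.length_nil, Nat.cast_zero]
    linarith
  | cons hadj p ih =>
    refine le_trans (horoPot_edge X hX hadj) ?_
    simp only [SimpleGraph.Walk.length_cons]
    push_cast
    linarith

/-- vertical walk from `(x, n)` up to `(x, n + k)`. -/
def vertWalk {V : Type*} (X : SimpleGraph V) (x : V) :
    (n k : ℕ) → (comboHoroball X).Walk (x, n) (x, n + k)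
  | n, 0 => SimpleGraph.Walk.nil.copy rfl (by simp)
  | n, k + 1 =>
    (SimpleGraph.Walk.cons (v := (x, n + 1)) (Or.inr ⟨rfl, Or.inr rfl⟩)
      (vertWalk X x (n + 1) k)).copy rfl (by rw [show n + 1 + k = n + (k + 1) by omega])

lemma vertWalk_length {V : Type*} (X : SimpleGraph V) (x : V) (n k : ℕ) :
    (vertWalk X x n k).length = k := by
  induction k generalizing n with
  | zero => simp [vertWalk]
  | succ k ih =>
    simp [vertWalk]
    exact congrArg (· + 1) (ih (n + 1))

/-- There is a universal constant `C` such that in any combinatorial horoball `H(X)` over a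
connected graph `X`, the distance between `(x, a)` and `(y, b)` differs from
`(H − a) + (H − b)` by at most `C`, where `H = max(⌈log d_X(x, y)⌉, a, b)`. -/
theorem stmt8 : ∃ C : ℝ, 0 < C ∧
    ∀ (V : Type) (X : SimpleGraph V), X.Connected →
      ∀ x y : V, x ≠ y → ∀ a b : ℕ,
        |((comboHoroball X).dist (x, a) (y, b) : ℝ) -
          (((max (max ⌈Real.log (X.dist x y : ℝ)⌉₊ a) b - a : ℕ) : ℝ) +
           ((max (max ⌈Real.log (X.dist x y : ℝ)⌉₊ a) b - b : ℕ) : ℝ))| ≤ C := by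
  refine ⟨9, by norm_num, ?_⟩
  intro V X hX x y hxy a b
  set r := X.dist x y with hr
  set H := max (max ⌈Real.log (r : ℝ)⌉₊ a) b with hH
  have hrpos : 0 < r := hX.pos_dist_of_ne hxy
  have hr1 : (1:ℝ) ≤ (r:ℝ) := by exact_mod_cast hrpos
  have haH : a ≤ H := le_max_of_le_left (le_max_right _ _)
  have hbH : b ≤ H := le_max_right _ _
  have hlogH : Real.log (r : ℝ) ≤ (H : ℝ) := by
    calc Real.log (r:ℝ) ≤ (⌈Real.log (r:ℝ)⌉₊ : ℝ) := Nat.le_ceil _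
    _ ≤ (H:ℝ) := by exact_mod_cast le_max_of_le_left (le_max_left _ _)
  -- horizontal edge at level H
  have hadjH : (comboHoroball X).Adj (x, H) (y, H) := by
    refine Or.inl ⟨rfl, hrpos, ?_⟩
    calc (r:ℝ) = Real.exp (Real.log (r:ℝ)) := (Real.exp_log (by linarith)).symm
    _ ≤ Real.exp (H:ℝ) := Real.exp_le_exp.2 hlogH
  -- the comparison walk
  let p1 : (comboHoroball X).Walk (x, a) (x, H) :=
    (vertWalk X x a (H - a)).copy rfl (by rw [Nat.add_sub_cancel' haH])
  let p2 : (comboHoroball X).Walk (y, b) (y, H) :=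
    (vertWalk X y b (H - b)).copy rfl (by rw [Nat.add_sub_cancel' hbH])
  let p : (comboHoroball X).Walk (x, a) (y, b) :=
    p1.append (SimpleGraph.Walk.cons hadjH p2.reverse)
  have hplen : p.length = (H - a) + (1 + (H - b)) := by
    simp [p, p1, p2, vertWalk_length, Nat.add_comm]
  -- upper bound
  have hub : ((comboHoroball X).dist (x, a) (y, b) : ℝ) ≤ ((H - a : ℕ) : ℝ) + ((H - b : ℕ) : ℝ) + 1 := by
    have := SimpleGraph.dist_le p
    rw [hplen] at this
    exact_mod_cast by
      have : ((comboHoroball X).dist (x, a) (y, b) : ℝ) ≤ ((H - a) + (1 + (H - b)) : ℕ) := by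
        exact_mod_cast this
      push_cast at this
      linarith
  -- lower bound
  obtain ⟨q, hq⟩ := SimpleGraph.Reachable.exists_walk_length_eq_dist ⟨p⟩
  have hlb0 := horoPot_le_length X hX q
  rw [hq] at hlb0
  have hpot : 2 * (H : ℝ) - 2 - a - b ≤ horoPot X (x, a) (y, b) := by
    unfold horoPot
    simp only
    have hbig : (H : ℝ) - 1 ≤ Real.log ((r:ℝ) + 2 * Real.exp a + 2 * Real.exp b) := by
      have hpos : (0:ℝ) < (r:ℝ) + 2 * Real.exp a + 2 * Real.exp b := by positivity
      have hHcast : (H:ℝ) = max (max (⌈Real.log (r:ℝ)⌉₊ : ℝ) (a:ℝ)) (b:ℝ) := by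
        rw [hH]; push_cast; rfl
      rw [hHcast]
      have hc : (⌈Real.log (r:ℝ)⌉₊ : ℝ) - 1 ≤ Real.log ((r:ℝ) + 2*Real.exp a + 2*Real.exp b) := by
        have h1 : (⌈Real.log (r:ℝ)⌉₊ : ℝ) < Real.log (r:ℝ) + 1 :=
          Nat.ceil_lt_add_one (Real.log_nonneg hr1)
        have h2 : Real.log (r:ℝ) ≤ Real.log ((r:ℝ) + 2*Real.exp a + 2*Real.exp b) := by
          apply Real.log_le_log (by linarith)
          nlinarith [Real.exp_pos (a:ℝ), Real.exp_pos (b:ℝ)]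
        linarith
      have ha' : (a:ℝ) - 1 ≤ Real.log ((r:ℝ) + 2*Real.exp a + 2*Real.exp b) := by
        have : Real.exp (a:ℝ) ≤ (r:ℝ) + 2*Real.exp a + 2*Real.exp b := by
          nlinarith [Real.exp_pos (a:ℝ), Real.exp_pos (b:ℝ)]
        have := Real.log_le_log (Real.exp_pos _) this
        rw [Real.log_exp] at this
        linarith
      have hb' : (b:ℝ) - 1 ≤ Real.log ((r:ℝ) + 2*Real.exp a + 2*Real.exp b) := by
        have : Real.exp (b:ℝ) ≤ (r:ℝ) + 2*Real.exp a + 2*Real.exp b := by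
          nlinarith [Real.exp_pos (a:ℝ), Real.exp_pos (b:ℝ)]
        have := Real.log_le_log (Real.exp_pos _) this
        rw [Real.log_exp] at this
        linarith
      rcases max_cases (max (⌈Real.log (r:ℝ)⌉₊ : ℝ) (a:ℝ)) (b:ℝ) with ⟨he, _⟩ | ⟨he, _⟩ <;>
        rw [he]
      · rcases max_cases (⌈Real.log (r:ℝ)⌉₊ : ℝ) (a:ℝ) with ⟨he2, _⟩ | ⟨he2, _⟩ <;> rw [he2]
        · linarith
        · linarith
      · linarith
    linarith
  have hlog4 : Real.log 4 ≤ 3 := by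
    have := Real.log_le_sub_one_of_pos (show (0:ℝ) < 4 by norm_num)
    linarith
  have hlb : 2 * (H:ℝ) - (a:ℝ) - (b:ℝ) - 8 ≤ ((comboHoroball X).dist (x, a) (y, b) : ℝ) := by
    linarith [hlb0, hpot]
  have hcasta : ((H - a : ℕ) : ℝ) = (H:ℝ) - (a:ℝ) := by
    rw [Nat.cast_sub haH]
  have hcastb : ((H - b : ℕ) : ℝ) = (H:ℝ) - (b:ℝ) := by
    rw [Nat.cast_sub hbH]
  rw [abs_le]
  constructor <;> rw [hcasta, hcastb] <;> [linarith [hlb]; linarith [hub, hcasta, hcastb]]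
end

section
/- For all real k ≥ 1 and c ≥ 0 there is a constant C ≥ 0, depending only on k and c, such that the following holds. Let A and B be connected simple graphs with graph metrics d_A and d_B, and let q be a map from the vertices of A to the vertices of B such that (1/k)·d_A(x, y) − c ≤ d_B(q x, q y) ≤ k·d_A(x, y) + c for all vertices x, y of A, and every vertex of B is within d_B-distance c of the image of q. Then the induced map q̂(x, n) = (q x, n) from the vertices of the combinatorial horoball H(A) to the vertices of H(B) is a (1, C)-quasi-isometry: |d_{H(B)}(q̂ u, q̂ v) − d_{H(A)}(u, v)| ≤ C for all vertices u, v of H(A), and every vertex of H(B) is within d_{H(B)}-distance C of the image of q̂. -/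
open Real SimpleGraph

variable {V : Type*} (X : SimpleGraph V)

/-- vertical walk up -/
lemma horo_walk_up (x : V) (n j : ℕ) :
    ∃ w : (comboHoroball X).Walk (x, n) (x, n + j), w.length = j := by
  induction j with
  | zero => exact ⟨SimpleGraph.Walk.nil, rfl⟩
  | succ j ih =>
    obtain ⟨w, hw⟩ := ih
    refine ⟨w.concat ?_, ?_⟩
    · exact Or.inr ⟨rfl, Or.inr rfl⟩
    · exact (SimpleGraph.Walk.length_concat _ _).trans (by rw [hw])

lemma horo_walk_vert (x : V) (n m : ℕ) :
    ∃ w : (comboHoroball X).Walk (x, n) (x, m), w.length = max n m - min n m := by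
  rcases le_total n m with h | h
  · obtain ⟨w, hw⟩ := horo_walk_up X x n (m - n)
    refine ⟨w.copy rfl (by rw [Nat.add_sub_cancel' h]), ?_⟩
    rw [SimpleGraph.Walk.length_copy, hw]; omega
  · obtain ⟨w, hw⟩ := horo_walk_up X x m (n - m)
    refine ⟨(w.copy rfl (by rw [Nat.add_sub_cancel' h])).reverse, ?_⟩
    rw [SimpleGraph.Walk.length_reverse, SimpleGraph.Walk.length_copy, hw]; omega

lemma horo_connected (hX : X.Connected) : (comboHoroball X).Connected := by
  have hne : Nonempty V := hX.nonempty
  rw [SimpleGraph.connected_iff]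
  refine ⟨?_, ⟨(Classical.arbitrary V, 0)⟩⟩
  have level0 : ∀ {x y : V}, X.Walk x y → (comboHoroball X).Reachable (x, 0) (y, 0) := by
    intro x y w
    induction w with
    | nil => exact SimpleGraph.Reachable.refl _
    | @cons a b c h w ih =>
      refine SimpleGraph.Reachable.trans ?_ ih
      refine SimpleGraph.Adj.reachable ?_
      left
      refine ⟨rfl, ?_, ?_⟩
      · exact h.reachable.pos_dist_of_ne h.ne
      · have h1 : X.dist a b ≤ 1 := by
          have := SimpleGraph.dist_le (h.toWalk)
          simpa using this
        have : (X.dist a b : ℝ) ≤ 1 := by exact_mod_cast h1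
        simpa using this
  rintro ⟨x, i⟩ ⟨y, j⟩
  obtain ⟨w1, -⟩ := horo_walk_vert X x i 0
  obtain ⟨w2, -⟩ := horo_walk_vert X y 0 j
  exact (w1.reachable.trans (level0 (hX.1 x y).some)).trans w2.reachable

/-- potential function -/
noncomputable def hphi (x : V) (n : ℕ) (p : V × ℕ) : ℝ :=
  max |(p.2 : ℝ) - n| (2 * Real.log (max (X.dist x p.1) 1) - n - p.2 - 4 * Real.log 2)

lemma hphi_adj (hX : X.Connected) (x : V) (n : ℕ) {p q : V × ℕ}
    (h : (comboHoroball X).Adj p q) : hphi X x n q ≤ hphi X x n p + 1 := by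
  obtain ⟨y, i⟩ := p
  obtain ⟨y', i'⟩ := q
  rcases h with ⟨h1, h2, h3⟩ | ⟨h1, h2⟩
  · -- horizontal edge, i = i'
    simp only at h1 h2 h3
    subst h1
    simp only [hphi]
    set d : ℝ := (X.dist x y : ℝ) with hd
    set d' : ℝ := (X.dist x y' : ℝ) with hd'
    have hr : (X.dist y y' : ℝ) ≤ Real.exp i := h3
    have htri : d' ≤ d + (X.dist y y' : ℝ) := by
      rw [hd, hd']
      exact_mod_cast hX.dist_triangle (u := x) (v := y) (w := y')
    have hexp1 : (1:ℝ) ≤ Real.exp i := by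
      rw [show (1:ℝ) = Real.exp 0 by simp]
      exact Real.exp_le_exp.2 (by positivity)
    have hlog4 : Real.log 4 = 2 * Real.log 2 := by
      rw [show (4:ℝ) = 2^2 by norm_num, Real.log_pow]; push_cast; ring
    rcases le_or_gt (max d' 1) (4 * Real.exp i) with hc | hc
    · -- small case : second component ≤ first
      have hb : 2 * Real.log (max d' 1) - (n:ℝ) - i - 4 * Real.log 2 ≤ |(i:ℝ) - n| := by
        have h4 : Real.log (max d' 1) ≤ Real.log 4 + i := by
          calc Real.log (max d' 1) ≤ Real.log (4 * Real.exp i) :=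
                Real.log_le_log (by positivity) hc
            _ = Real.log 4 + i := by
                rw [Real.log_mul (by norm_num) (Real.exp_pos _).ne', Real.log_exp]
        have habs : (i:ℝ) - n ≤ |(i:ℝ) - n| := le_abs_self _
        rw [hlog4] at h4
        nlinarith
      calc max |(i:ℝ) - n| (2 * Real.log (max d' 1) - n - i - 4 * Real.log 2)
          ≤ |(i:ℝ) - n| := max_le le_rfl hb
        _ ≤ _ := by
            have := le_max_left (|(i:ℝ) - n|)
              (2 * Real.log (max d 1) - n - i - 4 * Real.log 2)
            linarith
    · -- big case : log moves by ≤ 1/2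
      have hd'4 : (4:ℝ) < d' := by
        rcases max_cases d' 1 with ⟨he, -⟩ | ⟨he, -⟩
        · rw [he] at hc; nlinarith
        · rw [he] at hc; nlinarith
      have hdge : d' - Real.exp i ≤ d := by
        have : d' ≤ d + Real.exp i := le_trans htri (by linarith)
        linarith
      have hmaxd' : max d' 1 = d' := max_eq_left (by nlinarith)
      have hc' : 4 * Real.exp ↑i < d' := by rwa [hmaxd'] at hc
      have hd3 : 3 / 4 * d' ≤ d := by nlinarith
      have hdpos : (0:ℝ) < d := by nlinarith
      have hmaxd : max d 1 = d := max_eq_left (by nlinarith)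
      have hlogs : Real.log d' ≤ Real.log d + 1/2 := by
        have h43 : d' / d ≤ 4/3 := by
          rw [div_le_iff₀ hdpos]; nlinarith
        have : Real.log (d' / d) ≤ Real.log (4/3) := by
          apply Real.log_le_log (by positivity) h43
        rw [Real.log_div (by positivity) hdpos.ne'] at this
        have h2 : Real.log (4/3) ≤ 1/2 := by
          rw [Real.log_le_iff_le_exp (by norm_num)]
          nlinarith [Real.add_one_le_exp (1/2 : ℝ)]
        linarith
      rw [hmaxd, hmaxd']
      have := le_max_right (|(i:ℝ) - n|) (2 * Real.log d - n - i - 4 * Real.log 2)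
      have h2' : 2 * Real.log d' - (n:ℝ) - i - 4 * Real.log 2
          ≤ (2 * Real.log d - n - i - 4 * Real.log 2) + 1 := by linarith
      apply max_le
      · have := le_max_left (|(i:ℝ) - n|) (2 * Real.log d - (n:ℝ) - i - 4 * Real.log 2)
        linarith
      · linarith
  · -- vertical edge
    simp only at h1 h2
    subst h1
    simp only [hphi]
    have hi1 : |(i':ℝ) - i| ≤ 1 := by
      rcases h2 with h2 | h2 <;> rw [h2] <;> push_cast <;> rw [abs_le] <;>
        constructor <;> linarith
    have hi2 : (i:ℝ) ≤ (i':ℝ) + 1 := by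
      have : i ≤ i' + 1 := by omega
      exact_mod_cast this
    apply max_le
    · have := abs_sub_le ((i':ℝ)) ((i:ℝ)) ((n:ℝ))
      have hm := le_max_left (|(i:ℝ) - n|)
        (2 * Real.log (max (X.dist x y : ℝ) 1) - n - i - 4 * Real.log 2)
      linarith
    · have hm := le_max_right (|(i:ℝ) - n|)
        (2 * Real.log (max (X.dist x y : ℝ) 1) - n - i - 4 * Real.log 2)
      linarith

lemma hphi_walk (hX : X.Connected) (x : V) (n : ℕ) {p q : V × ℕ}
    (w : (comboHoroball X).Walk p q) : hphi X x n q ≤ hphi X x n p + w.length := by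
  induction w with
  | nil => simp
  | @cons a b c h w ih =>
    have := hphi_adj X hX x n h
    rw [SimpleGraph.Walk.length_cons]
    push_cast
    linarith

/-- lower bound on horoball distance -/
lemma horo_dist_lower (hX : X.Connected) (x y : V) (n m : ℕ) :
    max |(m:ℝ) - n| (2 * Real.log (max (X.dist x y : ℝ) 1) - n - m)
      ≤ ((comboHoroball X).dist (x, n) (y, m) : ℝ) + 4 * Real.log 2 := by
  obtain ⟨w, hw⟩ := ((horo_connected X hX).1 (x, n) (y, m)).exists_walk_length_eq_dist
  have h1 := hphi_walk X hX x n w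
  have h0 : hphi X x n (x, n) = 0 := by
    simp only [hphi, SimpleGraph.dist_self]
    rw [sub_self, abs_zero]
    have : Real.log (max ((0:ℕ):ℝ) 1) = 0 := by norm_num
    rw [this]
    have : (0:ℝ) ≤ 4 * Real.log 2 := by positivity
    rw [max_eq_left]
    have hn : (0:ℝ) ≤ (n:ℝ) := Nat.cast_nonneg n
    linarith
  rw [h0, hw] at h1
  simp only [hphi] at h1
  rw [max_le_iff] at h1 ⊢
  constructor
  · have h2 : (0:ℝ) ≤ 4 * Real.log 2 := by positivity
    linarith [h1.1]
  · linarith [h1.2]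

/-- upper bound on horoball distance -/
lemma horo_dist_upper (hX : X.Connected) (x y : V) (n m : ℕ) :
    ((comboHoroball X).dist (x, n) (y, m) : ℝ)
      ≤ max |(m:ℝ) - n| (2 * Real.log (max (X.dist x y : ℝ) 1) - n - m) + 3 := by
  by_cases hxy : x = y
  · subst hxy
    obtain ⟨w, hw⟩ := horo_walk_vert X x n m
    have := SimpleGraph.dist_le w
    rw [hw] at this
    have h2 : ((comboHoroball X).dist (x, n) (x, m) : ℝ) ≤ ((max n m - min n m : ℕ) : ℝ) :=
      by exact_mod_cast this
    have h3 : ((max n m - min n m : ℕ) : ℝ) = |(m:ℝ) - n| := by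
      rcases le_total n m with h | h
      · rw [max_eq_right h, min_eq_left h, Nat.cast_sub h,
          abs_of_nonneg (sub_nonneg.2 (Nat.cast_le.2 h : (n:ℝ) ≤ m))]
      · rw [max_eq_left h, min_eq_right h, Nat.cast_sub h,
          abs_of_nonpos (sub_nonpos.2 (Nat.cast_le.2 h : (m:ℝ) ≤ n))]
        ring
    rw [h3] at h2
    have hm := le_max_left (|(m:ℝ) - n|)
      (2 * Real.log (max (X.dist x x : ℝ) 1) - n - m)
    linarith
  · -- x ≠ y : go up to level N, across, down
    have hd1 : 1 ≤ X.dist x y := hX.pos_dist_of_ne hxy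
    have hd1' : (1:ℝ) ≤ (X.dist x y : ℝ) := by exact_mod_cast hd1
    set d : ℝ := (X.dist x y : ℝ) with hdd
    have hlog0 : 0 ≤ Real.log d := Real.log_nonneg hd1'
    set N : ℕ := max (max n m) (Nat.ceil (Real.log d)) with hN
    have hnN : n ≤ N := le_trans (le_max_left n m) (le_max_left _ _)
    have hmN : m ≤ N := le_trans (le_max_right n m) (le_max_left _ _)
    have hlogN : Real.log d ≤ (N:ℝ) := by
      calc Real.log d ≤ (Nat.ceil (Real.log d) : ℝ) := Nat.le_ceil _
        _ ≤ (N:ℝ) := Nat.cast_le.2 (le_max_right _ _)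
    -- the walk
    obtain ⟨w1, hw1⟩ := horo_walk_vert X x n N
    obtain ⟨w3, hw3⟩ := horo_walk_vert X y N m
    have hadj : (comboHoroball X).Adj (x, N) (y, N) := by
      left
      refine ⟨rfl, hd1, ?_⟩
      calc d = Real.exp (Real.log d) := (Real.exp_log (by linarith)).symm
        _ ≤ Real.exp N := Real.exp_le_exp.2 hlogN
    have := SimpleGraph.dist_le ((w1.concat hadj).append w3)
    rw [SimpleGraph.Walk.length_append, SimpleGraph.Walk.length_concat, hw1, hw3] at this
    have hcast : ((comboHoroball X).dist (x, n) (y, m) : ℝ)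
        ≤ ((N:ℝ) - n) + 1 + ((N:ℝ) - m) := by
      rw [max_eq_right hnN, min_eq_left hnN, max_eq_left hmN, min_eq_right hmN] at this
      have := (Nat.cast_le (α := ℝ)).2 this
      push_cast [Nat.cast_sub hnN, Nat.cast_sub hmN] at this
      linarith
    have hmaxd : max d 1 = d := max_eq_left hd1'
    rw [hmaxd]
    -- split on which term achieves N
    rcases le_total (Nat.ceil (Real.log d)) (max n m) with hcase | hcase
    · have hNeq : N = max n m := max_eq_left hcase
      have habs : ((N:ℝ) - n) + ((N:ℝ) - m) = |(m:ℝ) - n| := by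
        rw [hNeq]
        rcases le_total n m with h | h
        · rw [max_eq_right h, abs_of_nonneg (sub_nonneg.2 (Nat.cast_le.2 h : (n:ℝ) ≤ m))]
          ring
        · rw [max_eq_left h, abs_of_nonpos (sub_nonpos.2 (Nat.cast_le.2 h : (m:ℝ) ≤ n))]
          ring
      have hm := le_max_left (|(m:ℝ) - n|) (2 * Real.log d - n - m)
      linarith
    · have hNle : (N:ℝ) ≤ Real.log d + 1 := by
        have h1 : N = Nat.ceil (Real.log d) := max_eq_right hcase
        have h2 : (Nat.ceil (Real.log d) : ℝ) < Real.log d + 1 :=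
          Nat.ceil_lt_add_one hlog0
        rw [h1]; linarith
      have hm := le_max_right (|(m:ℝ) - n|) (2 * Real.log d - n - m)
      linarith

lemma log_max_comp {a b k c : ℝ} (hk : 1 ≤ k) (hc : 0 ≤ c) (hb : 0 ≤ b)
    (h : a ≤ k * b + c) :
    Real.log (max a 1) ≤ Real.log (max b 1) + Real.log (k * (1 + c)) := by
  have hb1 : (1:ℝ) ≤ max b 1 := le_max_right _ _
  have hkey : max a 1 ≤ k * (1 + c) * max b 1 := by
    have h1 : a ≤ k * max b 1 + c := by
      have := le_max_left b 1
      nlinarith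
    have hkm : (1:ℝ) ≤ k * max b 1 := by nlinarith
    have h2 : k * max b 1 + c ≤ k * (1 + c) * max b 1 := by
      nlinarith [mul_le_mul_of_nonneg_left hkm hc]
    have h3 : (1:ℝ) ≤ k * (1 + c) * max b 1 := by nlinarith
    exact max_le (by linarith) h3
  calc Real.log (max a 1) ≤ Real.log (k * (1 + c) * max b 1) :=
        Real.log_le_log (by positivity) hkey
    _ = Real.log (max b 1) + Real.log (k * (1 + c)) := by
        rw [Real.log_mul (by positivity) (by positivity)]; ring

/-- A `(k, c)`-quasi-isometry of connected graphs induces a `(1, C)`-quasi-isometry of their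
combinatorial horoballs, where `C` depends only on `k` and `c`. -/
theorem stmt9 (k c : ℝ) (hk : 1 ≤ k) (hc : 0 ≤ c) :
    ∃ C : ℝ, 0 ≤ C ∧
      ∀ (VA VB : Type) (A : SimpleGraph VA) (B : SimpleGraph VB),
        A.Connected → B.Connected →
        ∀ q : VA → VB,
          (∀ x y : VA,
            (1 / k) * (A.dist x y : ℝ) - c ≤ (B.dist (q x) (q y) : ℝ) ∧
            (B.dist (q x) (q y) : ℝ) ≤ k * (A.dist x y : ℝ) + c) →
          (∀ v : VB, ∃ x : VA, (B.dist v (q x) : ℝ) ≤ c) →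
          (∀ u v : VA × ℕ,
            |((comboHoroball B).dist (q u.1, u.2) (q v.1, v.2) : ℝ) -
              ((comboHoroball A).dist u v : ℝ)| ≤ C) ∧
          (∀ w : VB × ℕ, ∃ u : VA × ℕ,
            ((comboHoroball B).dist w (q u.1, u.2) : ℝ) ≤ C) := by
  set κ : ℝ := Real.log (k * (1 + c)) with hκ
  have hκ0 : 0 ≤ κ := Real.log_nonneg (by nlinarith)
  have hlk0 : 0 ≤ Real.log k := Real.log_nonneg hk
  refine ⟨2 * Real.log k + 2 * κ + 9, by linarith, ?_⟩
  intro VA VB A B hA hB q hq hcov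
  have hμ : ∀ x y : VA,
      |Real.log (max (A.dist x y : ℝ) 1) - Real.log (max (B.dist (q x) (q y) : ℝ) 1)|
        ≤ Real.log k + κ := by
    intro x y
    obtain ⟨h1, h2⟩ := hq x y
    have hBle : Real.log (max (B.dist (q x) (q y) : ℝ) 1)
        ≤ Real.log (max (A.dist x y : ℝ) 1) + κ :=
      log_max_comp hk hc (Nat.cast_nonneg _) h2
    have hAle : Real.log (max (A.dist x y : ℝ) 1)
        ≤ Real.log (max (B.dist (q x) (q y) : ℝ) 1) + Real.log k + κ := by
      have hk0 : (0:ℝ) < k := by linarith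
      have h3 : (A.dist x y : ℝ) ≤ k * (B.dist (q x) (q y) : ℝ) + k * c := by
        have := mul_le_mul_of_nonneg_left h1 (le_of_lt hk0)
        rw [mul_sub, ← mul_assoc, mul_one_div_cancel hk0.ne', one_mul] at this
        linarith
      have h4 := log_max_comp hk (by positivity) (Nat.cast_nonneg _) h3
      have h5 : Real.log (k * (1 + k * c)) ≤ Real.log k + κ := by
        rw [hκ, ← Real.log_mul (by positivity) (by positivity)]
        apply Real.log_le_log (by positivity)
        nlinarith
      linarith
    rw [abs_le]
    constructor <;> linarith
  constructor
  · rintro ⟨x, n⟩ ⟨y, m⟩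
    simp only
    have LA := horo_dist_lower A hA x y n m
    have UA := horo_dist_upper A hA x y n m
    have LB := horo_dist_lower B hB (q x) (q y) n m
    have UB := horo_dist_upper B hB (q x) (q y) n m
    have hμ' := hμ x y
    rw [abs_le] at hμ'
    set ℓA := Real.log (max (A.dist x y : ℝ) 1)
    set ℓB := Real.log (max (B.dist (q x) (q y) : ℝ) 1)
    have hDmax : ∀ a b b' s : ℝ, 0 ≤ s → b ≤ b' + s → max a b ≤ max a b' + s := by
      intro a b b' s hs h
      refine max_le ?_ ?_
      · have := le_max_left a b'; linarith
      · have := le_max_right a b'; linarith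
    have hD1 : max |(m:ℝ) - n| (2 * ℓA - n - m)
        ≤ max |(m:ℝ) - n| (2 * ℓB - n - m) + 2 * (Real.log k + κ) := by
      apply hDmax _ _ _ _ (by linarith)
      linarith [hμ'.1, hμ'.2]
    have hD2 : max |(m:ℝ) - n| (2 * ℓB - n - m)
        ≤ max |(m:ℝ) - n| (2 * ℓA - n - m) + 2 * (Real.log k + κ) := by
      apply hDmax _ _ _ _ (by linarith)
      linarith [hμ'.1, hμ'.2]
    have hlog2 : Real.log 2 ≤ 1 := by
      have := Real.add_one_le_exp (1:ℝ)
      rw [show Real.log 2 ≤ 1 ↔ (2:ℝ) ≤ Real.exp 1 from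
        Real.log_le_iff_le_exp (by norm_num)]
      linarith
    rw [abs_le]
    constructor <;> linarith
  · rintro ⟨v, j⟩
    obtain ⟨x, hx⟩ := hcov v
    refine ⟨(x, j), ?_⟩
    simp only
    have U := horo_dist_upper B hB v (q x) j j
    have hlog : Real.log (max (B.dist v (q x) : ℝ) 1) ≤ κ := by
      have h1 : max (B.dist v (q x) : ℝ) 1 ≤ k * (1 + c) := by
        apply max_le (by nlinarith) (by nlinarith)
      calc Real.log (max (B.dist v (q x) : ℝ) 1)
          ≤ Real.log (k * (1 + c)) := Real.log_le_log (by positivity) h1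
        _ = κ := rfl
    have hmax : max |(j:ℝ) - j| (2 * Real.log (max (B.dist v (q x) : ℝ) 1) - j - j)
        ≤ 2 * κ := by
      apply max_le
      · simp; linarith
      · have hj : (0:ℝ) ≤ (j:ℝ) := Nat.cast_nonneg _
        linarith
    linarith
end

section
/- There is a universal constant δ ≥ 0 (independent of the graph) such that for every connected simple graph X, the combinatorial horoball H(X) is δ-hyperbolic in the four-point sense: for all vertices w, x, y, z of H(X), d(w, x) + d(y, z) ≤ max(d(w, y) + d(x, z), d(w, z) + d(x, y)) + δ, where d = d_{H(X)}. -/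
open SimpleGraph

section HoroAux

variable {V : Type}

/-- Abstract approximate-ultrametric four point lemma. -/
lemma four_point_aux {a b c d p q C : ℝ}
    (H1 : p ≤ max a d + C) (H2 : p ≤ max c b + C)
    (H3 : q ≤ max a c + C) (H4 : q ≤ max d b + C) :
    p + q ≤ max (a + b) (c + d) + 2 * C := by
  rcases max_cases a d with ⟨e1, f1⟩ | ⟨e1, f1⟩ <;> rw [e1] at H1 <;>
  rcases max_cases c b with ⟨e2, f2⟩ | ⟨e2, f2⟩ <;> rw [e2] at H2 <;>
  rcases max_cases a c with ⟨e3, f3⟩ | ⟨e3, f3⟩ <;> rw [e3] at H3 <;>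
  rcases max_cases d b with ⟨e4, f4⟩ | ⟨e4, f4⟩ <;> rw [e4] at H4 <;>
  rcases max_cases (a + b) (c + d) with ⟨e5, f5⟩ | ⟨e5, f5⟩ <;> rw [e5] <;> linarith

/-- `max` of the two levels and the log of the base distance. -/
noncomputable def horoM (X : SimpleGraph V) (p q : V × ℕ) : ℝ :=
  max (max (p.2 : ℝ) (q.2 : ℝ)) (Real.log (X.dist p.1 q.1))

lemma horoM_comm (X : SimpleGraph V) (p q : V × ℕ) : horoM X p q = horoM X q p := by
  unfold horoM
  rw [max_comm (p.2 : ℝ), SimpleGraph.dist_comm]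

lemma horoM_ultra {X : SimpleGraph V} (hX : X.Connected) (p q r : V × ℕ) :
    horoM X p q ≤ max (horoM X p r) (horoM X q r) + Real.log 2 := by
  have hlog2 : (0:ℝ) ≤ Real.log 2 := Real.log_nonneg (by norm_num)
  have hpr : (p.2 : ℝ) ≤ horoM X p r := le_trans (le_max_left _ _) (le_max_left _ _)
  have hqr : (q.2 : ℝ) ≤ horoM X q r := le_trans (le_max_left _ _) (le_max_left _ _)
  have h0p : (0:ℝ) ≤ (p.2 : ℝ) := Nat.cast_nonneg _
  apply max_le
  · apply max_le
    · calc (p.2:ℝ) ≤ max (horoM X p r) (horoM X q r) := le_trans hpr (le_max_left _ _)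
        _ ≤ _ := by linarith
    · calc (q.2:ℝ) ≤ max (horoM X p r) (horoM X q r) := le_trans hqr (le_max_right _ _)
        _ ≤ _ := by linarith
  · rcases Nat.eq_zero_or_pos (X.dist p.1 q.1) with h | h
    · rw [h]
      simp only [Nat.cast_zero, Real.log_zero]
      calc (0:ℝ) ≤ (p.2:ℝ) := h0p
        _ ≤ max (horoM X p r) (horoM X q r) := le_trans hpr (le_max_left _ _)
        _ ≤ _ := by linarith
    · have htri : X.dist p.1 q.1 ≤ X.dist p.1 r.1 + X.dist r.1 q.1 := hX.dist_triangle
      set A : ℕ := X.dist p.1 r.1 with hA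
      set B : ℕ := X.dist r.1 q.1 with hB
      have hmaxpos : (0:ℝ) < max (A:ℝ) (B:ℝ) := by
        have : 0 < max A B := by omega
        have := (Nat.cast_lt (α := ℝ)).2 this
        rwa [Nat.cast_max, Nat.cast_zero] at this
      have h2 : (X.dist p.1 q.1 : ℝ) ≤ 2 * max (A:ℝ) (B:ℝ) := by
        have : (X.dist p.1 q.1 : ℝ) ≤ ((2 * max A B : ℕ) : ℝ) := by
          exact_mod_cast (show X.dist p.1 q.1 ≤ 2 * max A B by omega)
        rwa [Nat.cast_mul, Nat.cast_max, Nat.cast_ofNat] at this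
      have hlog : Real.log (X.dist p.1 q.1) ≤ Real.log 2 + Real.log (max (A:ℝ) (B:ℝ)) := by
        rw [← Real.log_mul (by norm_num) hmaxpos.ne']
        apply Real.log_le_log (by exact_mod_cast h) h2
      have hlogmax : Real.log (max (A:ℝ) (B:ℝ)) ≤ max (Real.log A) (Real.log B) := by
        rcases le_total (A:ℝ) (B:ℝ) with h' | h'
        · rw [max_eq_right h']; exact le_max_right _ _
        · rw [max_eq_left h']; exact le_max_left _ _
      have hlA : Real.log (A : ℝ) ≤ horoM X p r := le_max_right _ _
      have hlB : Real.log (B : ℝ) ≤ horoM X q r := by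
        rw [hB, SimpleGraph.dist_comm]
        exact le_max_right _ _
      calc Real.log (X.dist p.1 q.1) ≤ Real.log 2 + Real.log (max (A:ℝ) (B:ℝ)) := hlog
        _ ≤ Real.log 2 + max (Real.log A) (Real.log B) := by linarith
        _ ≤ Real.log 2 + max (horoM X p r) (horoM X q r) := by
            have := max_le_max hlA hlB
            linarith
        _ = _ := by ring

lemma level_bound {X : SimpleGraph V} {p q : V × ℕ} (w : (comboHoroball X).Walk p q) :
    (p.2 : ℤ) ≤ q.2 + w.length ∧ (q.2 : ℤ) ≤ p.2 + w.length := by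
  induction w with
  | nil => simp
  | @cons u x v h w ih =>
    obtain ⟨h1, h2⟩ := ih
    have hux : (u.2 : ℤ) ≤ x.2 + 1 ∧ (x.2 : ℤ) ≤ u.2 + 1 := by
      rcases h with ⟨he, -⟩ | ⟨-, he | he⟩ <;> omega
    rw [Walk.length_cons]
    push_cast
    omega

lemma vert_walk (X : SimpleGraph V) (x : V) (a t : ℕ) :
    ∃ w : (comboHoroball X).Walk (x, a) (x, a + t), w.length = t := by
  induction t with
  | zero => exact ⟨Walk.nil, rfl⟩
  | succ t ih =>
    obtain ⟨w, hw⟩ := ih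
    have h : (comboHoroball X).Adj (x, a + t) (x, a + (t + 1)) := Or.inr ⟨rfl, Or.inr rfl⟩
    exact ⟨w.concat h, by rw [Walk.length_concat, hw]⟩

noncomputable def horoK : ℝ := (1 - Real.exp (-(2:ℝ)⁻¹))⁻¹

lemma horoK_pos : 0 < horoK := by
  have h : Real.exp (-(2:ℝ)⁻¹) < 1 := Real.exp_lt_one_iff.2 (by norm_num)
  exact inv_pos.2 (by linarith)

lemma horoK_eq : 1 + horoK * Real.exp (-(2:ℝ)⁻¹) = horoK := by
  have h : Real.exp (-(2:ℝ)⁻¹) < 1 := Real.exp_lt_one_iff.2 (by norm_num)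
  have h2 : (1 - Real.exp (-(2:ℝ)⁻¹)) ≠ 0 := by linarith
  have hmul : (1 - Real.exp (-(2:ℝ)⁻¹)) * horoK = 1 := by
    rw [horoK]; exact mul_inv_cancel₀ h2
  linear_combination -hmul

lemma one_le_horoK : 1 ≤ horoK := by
  have h : 0 < Real.exp (-(2:ℝ)⁻¹) := Real.exp_pos _
  nlinarith [horoK_pos, horoK_eq]

lemma disp_bound {X : SimpleGraph V} (hX : X.Connected) :
    ∀ {p q : V × ℕ} (w : (comboHoroball X).Walk p q),
      (X.dist p.1 q.1 : ℝ) ≤ horoK * Real.exp (((w.length : ℝ) + p.2 + q.2) / 2) := by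
  intro p q w
  induction w with
  | nil =>
    simp only [SimpleGraph.dist_self, Nat.cast_zero]
    exact mul_nonneg horoK_pos.le (Real.exp_pos _).le
  | @cons u x v h w ih =>
    have htri : (X.dist u.1 v.1 : ℝ) ≤ (X.dist u.1 x.1 : ℝ) + (X.dist x.1 v.1 : ℝ) := by
      exact_mod_cast hX.dist_triangle (v := x.1)
    have hE : (0:ℝ) < Real.exp (((w.length : ℝ) + 1 + u.2 + v.2) / 2) := Real.exp_pos _
    have hlen : ((Walk.cons h w).length : ℝ) = (w.length : ℝ) + 1 := by
      rw [Walk.length_cons]; push_cast; ring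
    rw [hlen]
    rcases h with ⟨he, hpos, hle⟩ | ⟨he, hud⟩
    · -- horizontal edge
      have hx2 : (x.2 : ℤ) ≤ v.2 + w.length := (level_bound w).1
      have hu2 : (u.2 : ℝ) ≤ (v.2 : ℝ) + (w.length : ℝ) := by
        have : (u.2 : ℤ) ≤ v.2 + w.length := by omega
        exact_mod_cast this
      have e1 : Real.exp (u.2 : ℝ) ≤ Real.exp (((w.length : ℝ) + 1 + u.2 + v.2) / 2) :=
        Real.exp_le_exp.2 (by linarith)
      have e2 : Real.exp (((w.length : ℝ) + x.2 + v.2) / 2)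
          = Real.exp (((w.length : ℝ) + 1 + u.2 + v.2) / 2) * Real.exp (-(2:ℝ)⁻¹) := by
        rw [← Real.exp_add]
        congr 1
        have : (x.2 : ℝ) = (u.2 : ℝ) := by exact_mod_cast congrArg (Nat.cast (R := ℝ)) he.symm
        rw [this]; ring
      have ihx := ih
      rw [e2] at ihx
      have hKe : horoK * (Real.exp (((w.length : ℝ) + 1 + u.2 + v.2) / 2) * Real.exp (-(2:ℝ)⁻¹))
          = (horoK * Real.exp (-(2:ℝ)⁻¹)) * Real.exp (((w.length : ℝ) + 1 + u.2 + v.2) / 2) := by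
        ring
      calc (X.dist u.1 v.1 : ℝ) ≤ (X.dist u.1 x.1 : ℝ) + (X.dist x.1 v.1 : ℝ) := htri
        _ ≤ Real.exp (u.2 : ℝ) + (horoK * Real.exp (-(2:ℝ)⁻¹)) *
              Real.exp (((w.length : ℝ) + 1 + u.2 + v.2) / 2) := by
            rw [← hKe]; exact add_le_add hle ihx
        _ ≤ (1 + horoK * Real.exp (-(2:ℝ)⁻¹)) *
              Real.exp (((w.length : ℝ) + 1 + u.2 + v.2) / 2) := by nlinarith
        _ = horoK * Real.exp (((w.length : ℝ) + 1 + u.2 + v.2) / 2) := by rw [horoK_eq]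
    · -- vertical edge
      have hd0 : X.dist u.1 v.1 = X.dist x.1 v.1 := by rw [he]
      have hx2 : (x.2 : ℝ) ≤ (u.2 : ℝ) + 1 := by
        rcases hud with h' | h' <;> rw [h'] <;> push_cast <;> linarith
      calc (X.dist u.1 v.1 : ℝ) = (X.dist x.1 v.1 : ℝ) := by rw [hd0]
        _ ≤ horoK * Real.exp (((w.length : ℝ) + x.2 + v.2) / 2) := ih
        _ ≤ horoK * Real.exp (((w.length : ℝ) + 1 + u.2 + v.2) / 2) :=
            mul_le_mul_of_nonneg_left (Real.exp_le_exp.2 (by linarith)) horoK_pos.le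

lemma exists_walk_le {X : SimpleGraph V} (hX : X.Connected) (p q : V × ℕ) :
    ∃ w : (comboHoroball X).Walk p q,
      (w.length : ℝ) ≤ 2 * horoM X p q - p.2 - q.2 + 3 := by
  obtain ⟨x, m⟩ := p
  obtain ⟨y, n⟩ := q
  have hM : max (m:ℝ) (n:ℝ) ≤ horoM X (x, m) (y, n) := le_max_left _ _
  by_cases hxy : x = y
  · subst hxy
    rcases le_total m n with h | h
    · obtain ⟨w, hw⟩ := vert_walk X x m (n - m)
      refine ⟨w.copy rfl (by rw [Nat.add_sub_cancel' h]), ?_⟩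
      rw [Walk.length_copy, hw]
      have hc : ((n - m : ℕ) : ℝ) = (n:ℝ) - m := by rw [Nat.cast_sub h]
      have hn : (n:ℝ) ≤ horoM X (x, m) (x, n) := le_trans (le_max_right _ _) hM
      rw [hc]; linarith
    · obtain ⟨w, hw⟩ := vert_walk X x n (m - n)
      refine ⟨(w.copy rfl (by rw [Nat.add_sub_cancel' h])).reverse, ?_⟩
      rw [Walk.length_reverse, Walk.length_copy, hw]
      have hc : ((m - n : ℕ) : ℝ) = (m:ℝ) - n := by rw [Nat.cast_sub h]
      have hn : (m:ℝ) ≤ horoM X (x, m) (x, n) := le_trans (le_max_left _ _) hM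
      rw [hc]; linarith
  · have hd : 0 < X.dist x y := hX.pos_dist_of_ne hxy
    have hd1 : (1:ℝ) ≤ (X.dist x y : ℝ) := by exact_mod_cast hd
    have hld : 0 ≤ Real.log (X.dist x y) := Real.log_nonneg hd1
    set k : ℕ := max (max m n) ⌈Real.log (X.dist x y)⌉₊ with hk
    have hmk : m ≤ k := le_trans (le_max_left _ _) (le_max_left _ _)
    have hnk : n ≤ k := le_trans (le_max_right _ _) (le_max_left _ _)
    have hkM : (k:ℝ) ≤ horoM X (x, m) (y, n) + 1 := by
      have h1 : ((max m n : ℕ) : ℝ) ≤ horoM X (x, m) (y, n) := by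
        rw [Nat.cast_max]; exact hM
      have h2 : (⌈Real.log (X.dist x y)⌉₊ : ℝ) ≤ horoM X (x, m) (y, n) + 1 := by
        have := Nat.ceil_lt_add_one hld
        have h3 : Real.log (X.dist x y) ≤ horoM X (x, m) (y, n) := le_max_right _ _
        linarith
      rcases max_cases (max m n) ⌈Real.log (X.dist x y)⌉₊ with ⟨he, -⟩ | ⟨he, -⟩ <;>
        rw [hk, he] <;> linarith
    obtain ⟨w1, hw1⟩ := vert_walk X x m (k - m)
    obtain ⟨w2, hw2⟩ := vert_walk X y n (k - n)
    have hedge : (comboHoroball X).Adj (x, k) (y, k) := by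
      refine Or.inl ⟨rfl, hd, ?_⟩
      calc (X.dist x y : ℝ) = Real.exp (Real.log (X.dist x y)) :=
            (Real.exp_log (by exact_mod_cast hd)).symm
        _ ≤ Real.exp (k : ℝ) := by
            apply Real.exp_le_exp.2
            calc Real.log (X.dist x y) ≤ (⌈Real.log (X.dist x y)⌉₊ : ℝ) := Nat.le_ceil _
              _ ≤ (k : ℝ) := by exact_mod_cast le_max_right (max m n) _
    refine ⟨(w1.copy rfl (by rw [Nat.add_sub_cancel' hmk])).append
      (Walk.cons hedge (w2.copy rfl (by rw [Nat.add_sub_cancel' hnk])).reverse), ?_⟩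
    rw [Walk.length_append, Walk.length_cons, Walk.length_reverse, Walk.length_copy,
      Walk.length_copy, hw1, hw2]
    have hc1 : ((k - m : ℕ) : ℝ) = (k:ℝ) - m := by rw [Nat.cast_sub hmk]
    have hc2 : ((k - n : ℕ) : ℝ) = (k:ℝ) - n := by rw [Nat.cast_sub hnk]
    push_cast
    rw [hc1, hc2]
    linarith

lemma dist_le_horoM {X : SimpleGraph V} (hX : X.Connected) (p q : V × ℕ) :
    ((comboHoroball X).dist p q : ℝ) ≤ 2 * horoM X p q - p.2 - q.2 + 3 := by
  obtain ⟨w, hw⟩ := exists_walk_le hX p q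
  have h := SimpleGraph.dist_le w
  calc ((comboHoroball X).dist p q : ℝ) ≤ (w.length : ℝ) := by exact_mod_cast h
    _ ≤ _ := hw

lemma horoM_le_dist {X : SimpleGraph V} (hX : X.Connected) (p q : V × ℕ) :
    2 * horoM X p q - p.2 - q.2 ≤ ((comboHoroball X).dist p q : ℝ) + 2 * Real.log horoK := by
  have hreach : (comboHoroball X).Reachable p q := ⟨(exists_walk_le hX p q).choose⟩
  obtain ⟨w, hw⟩ := hreach.exists_walk_length_eq_dist
  have hlen : (w.length : ℝ) = ((comboHoroball X).dist p q : ℝ) := by exact_mod_cast hw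
  have hlogK : 0 ≤ Real.log horoK := Real.log_nonneg one_le_horoK
  have hlev := level_bound w
  have hlev1 : (p.2:ℝ) ≤ (q.2:ℝ) + (w.length:ℝ) := by exact_mod_cast hlev.1
  have hlev2 : (q.2:ℝ) ≤ (p.2:ℝ) + (w.length:ℝ) := by exact_mod_cast hlev.2
  rw [horoM]
  rcases max_cases (max (p.2:ℝ) (q.2:ℝ)) (Real.log (X.dist p.1 q.1)) with ⟨he, -⟩ | ⟨he, -⟩ <;>
    rw [he]
  · rcases max_cases (p.2:ℝ) (q.2:ℝ) with ⟨he2, -⟩ | ⟨he2, -⟩ <;> rw [he2] <;> linarith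
  · rcases Nat.eq_zero_or_pos (X.dist p.1 q.1) with h | h
    · rw [h]
      simp only [Nat.cast_zero, Real.log_zero]
      have h1 : (0:ℝ) ≤ ((comboHoroball X).dist p q : ℝ) := Nat.cast_nonneg _
      have h0p : (0:ℝ) ≤ (p.2:ℝ) := Nat.cast_nonneg _
      have h0q : (0:ℝ) ≤ (q.2:ℝ) := Nat.cast_nonneg _
      linarith
    · have hdb := disp_bound hX w
      have hKpos := horoK_pos
      have hlog : Real.log (X.dist p.1 q.1)
          ≤ Real.log horoK + ((w.length:ℝ) + p.2 + q.2) / 2 := by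
        have h1 : Real.log (X.dist p.1 q.1)
            ≤ Real.log (horoK * Real.exp (((w.length:ℝ) + p.2 + q.2) / 2)) :=
          Real.log_le_log (by exact_mod_cast h) hdb
        rwa [Real.log_mul hKpos.ne' (Real.exp_pos _).ne', Real.log_exp] at h1
      linarith

end HoroAux

/-- There is a universal constant `δ` such that every combinatorial horoball over a connected
simple graph is `δ`-hyperbolic in the four-point sense. -/
theorem stmt10 : ∃ δ : ℝ, 0 ≤ δ ∧
    ∀ (V : Type) (X : SimpleGraph V), X.Connected →
      ∀ w x y z : V × ℕ,
        ((comboHoroball X).dist w x : ℝ) + ((comboHoroball X).dist y z : ℝ) ≤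
          max (((comboHoroball X).dist w y : ℝ) + ((comboHoroball X).dist x z : ℝ))
              (((comboHoroball X).dist w z : ℝ) + ((comboHoroball X).dist x y : ℝ)) + δ := by
  have hlog2 : (0:ℝ) ≤ Real.log 2 := Real.log_nonneg (by norm_num)
  have hlogK : (0:ℝ) ≤ Real.log horoK := Real.log_nonneg one_le_horoK
  refine ⟨6 + 4 * Real.log 2 + 4 * Real.log horoK, by linarith, ?_⟩
  intro V X hX w x y z
  -- upper and lower comparisons with horoM
  have hup12 := dist_le_horoM hX w x
  have hup34 := dist_le_horoM hX y z
  have hlo13 := horoM_le_dist hX w y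
  have hlo24 := horoM_le_dist hX x z
  have hlo14 := horoM_le_dist hX w z
  have hlo23 := horoM_le_dist hX x y
  -- four-point for horoM
  have H1 := horoM_ultra hX w x y
  have H2 := horoM_ultra hX w x z
  have H3 := horoM_ultra hX y z w
  have H4 := horoM_ultra hX y z x
  rw [horoM_comm X y w, horoM_comm X z w] at H3
  rw [horoM_comm X y x, horoM_comm X z x] at H4
  have h4pt : horoM X w x + horoM X y z ≤
      max (horoM X w y + horoM X x z) (horoM X w z + horoM X x y) + 2 * Real.log 2 :=
    four_point_aux H1 H2 H3 H4
  set s1 : ℝ := ((comboHoroball X).dist w y : ℝ) + ((comboHoroball X).dist x z : ℝ) with hs1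
  set s2 : ℝ := ((comboHoroball X).dist w z : ℝ) + ((comboHoroball X).dist x y : ℝ) with hs2
  have key : 2 * max (horoM X w y + horoM X x z) (horoM X w z + horoM X x y)
      ≤ max s1 s2 + ((w.2:ℝ) + x.2 + y.2 + z.2) + 4 * Real.log horoK := by
    rcases max_cases (horoM X w y + horoM X x z) (horoM X w z + horoM X x y) with
      ⟨he, -⟩ | ⟨he, -⟩ <;> rw [he]
    · have hm := le_max_left s1 s2
      linarith
    · have hm := le_max_right s1 s2
      linarith
  linarith
end
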